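/- Let H and K be complex Hilbert spaces with H ≠ {0}, and let A, B : H → K be bounded operators with B ≠ 0 and ker A ⊆ ker B. Then γ(A) − γ(B) ≤ ‖B − A‖, where γ(T) = inf{‖Tx‖ : ‖x‖ = 1, x ∈ (ker T)ᗮ} is the reduced minimum modulus. -/

import Mathlib

set_option maxHeartbeats 1000000
noncomputable section

open scoped ComplexInnerProductSpace

/-- Reduced minimum modulus of a bounded operator between inner product spaces:
`γ(A) = inf {‖A x‖ : ‖x‖ = 1, x ∈ (ker A)ᗮ}`. -/
def redMinMod {E F : Type*} [NormedAddCommGroup E] [InnerProductSpace ℂ E]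
    [NormedAddCommGroup F] [InnerProductSpace ℂ F] (A : E →L[ℂ] F) : ℝ :=
  sInf ((fun x => ‖A x‖) '' {x : E | ‖x‖ = 1 ∧ x ∈ (LinearMap.ker (A : E →ₗ[ℂ] F))ᗮ})

/-- If `ker A ⊆ ker B` and `B ≠ 0`, then `γ(A) − γ(B) ≤ ‖B − A‖`. -/
theorem redMinMod_sub_redMinMod_le
    {H K : Type*} [NormedAddCommGroup H] [InnerProductSpace ℂ H] [CompleteSpace H]
    [NormedAddCommGroup K] [InnerProductSpace ℂ K] [CompleteSpace K]
    [Nontrivial H]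
    (A B : H →L[ℂ] K) (hB : B ≠ 0) (hker : LinearMap.ker (A : H →ₗ[ℂ] K) ≤ LinearMap.ker (B : H →ₗ[ℂ] K)) :
    redMinMod A - redMinMod B ≤ ‖B - A‖ := by
  have hAcl : IsClosed (LinearMap.ker (A : H →ₗ[ℂ] K) : Set H) := ContinuousLinearMap.isClosed_ker A
  haveI : CompleteSpace (LinearMap.ker (A : H →ₗ[ℂ] K)) := hAcl.completeSpace_coe
  -- key: for every x in the B-set, redMinMod A ≤ ‖B x‖ + ‖B - A‖
  have key : ∀ x : H, ‖x‖ = 1 → x ∈ (LinearMap.ker (B : H →ₗ[ℂ] K))ᗮ →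
      redMinMod A ≤ ‖B x‖ + ‖B - A‖ := by
    intro x hx hxB
    obtain ⟨u, hu, v, hv, hxuv⟩ := (LinearMap.ker (A : H →ₗ[ℂ] K)).exists_add_mem_mem_orthogonal x
    have hvnorm : 1 ≤ ‖v‖ := by
      have h1 : (⟪x, x⟫ : ℂ) = ⟪x, v⟫ := by
        nth_rewrite 2 [hxuv]
        rw [inner_add_right, Submodule.inner_left_of_mem_orthogonal (hker hu) hxB, zero_add]
      have h2 : (1 : ℝ) = ‖(⟪x, v⟫ : ℂ)‖ := by
        have := inner_self_eq_norm_sq_to_K (𝕜 := ℂ) x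
        rw [h1] at this
        rw [this, hx]; norm_num
      calc (1:ℝ) = ‖(⟪x, v⟫ : ℂ)‖ := h2
        _ ≤ ‖x‖ * ‖v‖ := norm_inner_le_norm x v
        _ = ‖v‖ := by rw [hx, one_mul]
    have hv0 : v ≠ 0 := by intro h; rw [h, norm_zero] at hvnorm; linarith
    have hvpos : 0 < ‖v‖ := norm_pos_iff.mpr hv0
    set w := ‖v‖⁻¹ • v with hw
    have hwnorm : ‖w‖ = 1 := by
      rw [hw, norm_smul, norm_inv, norm_norm, inv_mul_cancel₀ hvpos.ne']
    have hwmem : w ∈ (LinearMap.ker (A : H →ₗ[ℂ] K))ᗮ := Submodule.smul_mem _ _ hv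
    have hAle : redMinMod A ≤ ‖A w‖ := by
      apply csInf_le
      · exact ⟨0, fun r ⟨y, _, hy⟩ => hy ▸ norm_nonneg _⟩
      · exact ⟨w, ⟨hwnorm, hwmem⟩, rfl⟩
    have hAwAx : ‖A w‖ ≤ ‖A x‖ := by
      have hAx : A x = A v := by
        rw [hxuv, map_add, show A u = 0 from hu, zero_add]
      rw [hw, A.map_smul_of_tower, norm_smul, norm_inv, norm_norm, hAx]
      have : ‖A v‖ ≤ ‖v‖ * ‖A v‖ := le_mul_of_one_le_left (norm_nonneg _) hvnorm
      calc ‖v‖⁻¹ * ‖A v‖ ≤ ‖v‖⁻¹ * (‖v‖ * ‖A v‖) := by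
            exact mul_le_mul_of_nonneg_left this (inv_nonneg.mpr hvpos.le)
        _ = ‖A v‖ := by field_simp
    have hAxBx : ‖A x‖ ≤ ‖B x‖ + ‖B - A‖ := by
      have : ‖A x‖ ≤ ‖B x‖ + ‖(B - A) x‖ := by
        have : A x = B x - (B - A) x := by simp
        rw [this]
        exact norm_sub_le _ _
      refine this.trans (add_le_add_right ?_ _)
      calc ‖(B - A) x‖ ≤ ‖B - A‖ * ‖x‖ := (B - A).le_opNorm x
        _ = ‖B - A‖ := by rw [hx, mul_one]
    linarith
  -- B-set nonempty
  have hBtop : LinearMap.ker (B : H →ₗ[ℂ] K) ≠ ⊤ := by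
    intro h
    apply hB
    ext y
    simpa using (h ▸ Submodule.mem_top : y ∈ LinearMap.ker (B : H →ₗ[ℂ] K))
  have hBcl : IsClosed (LinearMap.ker (B : H →ₗ[ℂ] K) : Set H) := ContinuousLinearMap.isClosed_ker B
  haveI : CompleteSpace (LinearMap.ker (B : H →ₗ[ℂ] K)) := hBcl.completeSpace_coe
  have hne : ∃ z : H, z ≠ 0 ∧ z ∈ (LinearMap.ker (B : H →ₗ[ℂ] K))ᗮ := by
    have : (LinearMap.ker (B : H →ₗ[ℂ] K))ᗮ ≠ ⊥ := by
      rw [Ne, Submodule.orthogonal_eq_bot_iff]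
      exact hBtop
    obtain ⟨z, hz, hz0⟩ := Submodule.exists_mem_ne_zero_of_ne_bot this
    exact ⟨z, hz0, hz⟩
  obtain ⟨z, hz0, hzmem⟩ := hne
  have hzpos : 0 < ‖z‖ := norm_pos_iff.mpr hz0
  set z' := ‖z‖⁻¹ • z with hz'
  have hz'norm : ‖z'‖ = 1 := by
    rw [hz', norm_smul, norm_inv, norm_norm, inv_mul_cancel₀ hzpos.ne']
  have hz'mem : z' ∈ (LinearMap.ker (B : H →ₗ[ℂ] K))ᗮ := Submodule.smul_mem _ _ hzmem
  have hBsetne : ((fun x => ‖B x‖) '' {x : H | ‖x‖ = 1 ∧ x ∈ (LinearMap.ker (B : H →ₗ[ℂ] K))ᗮ}).Nonempty :=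
    ⟨‖B z'‖, z', ⟨hz'norm, hz'mem⟩, rfl⟩
  have hlb : redMinMod A - ‖B - A‖ ≤ redMinMod B := by
    apply le_csInf hBsetne
    rintro r ⟨y, ⟨hy1, hy2⟩, rfl⟩
    have := key y hy1 hy2
    linarith
  linarith
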